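/- Suppose ψ : (ℝ^d)^n → ℝ^q is symmetric, continuous, and separates S_n-orbits (ψ(x) = ψ(x') iff x' is a permutation of x), and φ : (ℝ^d)^n → ℝ^p is a tuple of anti-symmetric continuous functions with φ(x) = 0 iff x_i = x_j for some i ≠ j. Then η = (φ, ψ_1 φ, ..., ψ_q φ) : (ℝ^d)^n → ℝ^{p(q+1)} satisfies: each component is anti-symmetric and continuous; η(x) = 0 iff x_i = x_j for some i ≠ j; and η(x) = η(x') ≠ 0 implies x' is a permutation of x. -/

import Mathlib

/-- Construction of the anti-symmetric basis: if `ψ` is symmetric, continuous and separates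
`S_n`-orbits, and `φ` is anti-symmetric, continuous and vanishes exactly when two particles
coincide, then `η = (φ, ψ₁φ, …, ψ_qφ)` is anti-symmetric, continuous, vanishes exactly when two
particles coincide, and separates orbits away from zero. -/
theorem construction_satisfies_assumptions {d n p q : ℕ}
    (ψ : (Fin n → (Fin d → ℝ)) → (Fin q → ℝ))
    (hψc : Continuous ψ)
    (hψs : ∀ (σ : Equiv.Perm (Fin n)) (x : Fin n → (Fin d → ℝ)), ψ (x ∘ σ) = ψ x)
    (hψsep : ∀ x x' : Fin n → (Fin d → ℝ),
      ψ x = ψ x' ↔ ∃ σ : Equiv.Perm (Fin n), x' = x ∘ σ)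
    (φ : (Fin n → (Fin d → ℝ)) → (Fin p → ℝ))
    (hφc : Continuous φ)
    (hφa : ∀ (σ : Equiv.Perm (Fin n)) (x : Fin n → (Fin d → ℝ)),
      φ (x ∘ σ) = ((Equiv.Perm.sign σ : ℤ) : ℝ) • φ x)
    (hφ0 : ∀ x : Fin n → (Fin d → ℝ), φ x = 0 ↔ ∃ i j : Fin n, i ≠ j ∧ x i = x j)
    (η : (Fin n → (Fin d → ℝ)) → (Fin p × Option (Fin q) → ℝ))
    (hη : ∀ x i, η x (i, none) = φ x i ∧ ∀ l : Fin q, η x (i, some l) = ψ x l * φ x i) :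
    ((∀ (σ : Equiv.Perm (Fin n)) (x : Fin n → (Fin d → ℝ)),
        η (x ∘ σ) = ((Equiv.Perm.sign σ : ℤ) : ℝ) • η x) ∧ Continuous η) ∧
    (∀ x : Fin n → (Fin d → ℝ), η x = 0 ↔ ∃ i j : Fin n, i ≠ j ∧ x i = x j) ∧
    (∀ x x' : Fin n → (Fin d → ℝ), η x = η x' → η x ≠ 0 →
      ∃ σ : Equiv.Perm (Fin n), x' = x ∘ σ) := by
  have key : ∀ x (k : Fin p × Option (Fin q)),
      η x k = (match k.2 with | none => φ x k.1 | some l => ψ x l * φ x k.1) := by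
    rintro x ⟨i, _ | l⟩
    · exact (hη x i).1
    · exact (hη x i).2 l
  have hzero : ∀ x, η x = 0 ↔ φ x = 0 := by
    intro x
    constructor
    · intro h
      funext i
      have := congrFun h (i, none)
      simpa [key] using this
    · intro h
      funext k
      rw [key]
      rcases k with ⟨i, _ | l⟩ <;> simp [congrFun h i]
  refine ⟨⟨?_, ?_⟩, ?_, ?_⟩
  · intro σ x
    funext k
    rw [key]
    rcases k with ⟨i, _ | l⟩ <;>
      simp [key, hφa σ x, hψs σ x, mul_assoc, mul_left_comm]
  · apply continuous_pi
    rintro ⟨i, _ | l⟩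
    · simpa [key, Function.comp_def] using (continuous_apply i).comp hφc
    · simp only [key]
      exact ((continuous_apply l).comp hψc).mul ((continuous_apply i).comp hφc)
  · intro x
    rw [hzero, hφ0]
  · intro x x' hxx hne
    have hφeq : φ x = φ x' := by
      funext i
      have := congrFun hxx (i, none)
      simpa [key] using this
    have hφne : φ x ≠ 0 := fun h => hne ((hzero x).2 h)
    obtain ⟨i, hi⟩ := Function.ne_iff.1 hφne
    have hψeq : ψ x = ψ x' := by
      funext l
      have := congrFun hxx (i, some l)
      simp only [key, ← hφeq] at this
      exact mul_right_cancel₀ (by simpa using hi) this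
    exact (hψsep x x').1 hψeq
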